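/- There exists an absolute constant c ≥ 1 such that for every a with 0 < a ≤ 1 and every v > 0, c⁻¹ · R ≤ ∫_0^a e^{−v·u} · u/((log u)² + 1) du ≤ c · R, where R = 1/((v + 1/a)² · ((log(v + 1/a))² + 1)). -/

import Mathlib

open MeasureTheory Real

lemma xexp_le_one (x : ℝ) (_hx : 0 ≤ x) : x * Real.exp (-x) ≤ 1 := by
  calc x * Real.exp (-x) ≤ Real.exp x * Real.exp (-x) := by
        have : x ≤ Real.exp x := by linarith [Real.add_one_le_exp x]
        exact mul_le_mul_of_nonneg_right this (Real.exp_pos _).le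
    _ = 1 := by rw [← Real.exp_add]; simp

lemma star_lem (b u : ℝ) (hb : 1 ≤ b) (hu : 1/b < u) :
    Real.log b ^ 2 + 1 ≤ 1024 * Real.exp (b*u/8) * (Real.log u ^ 2 + 1) := by
  have hbpos : (0:ℝ) < b := by linarith
  have hupos : (0:ℝ) < u := lt_trans (by positivity) hu
  have hs1 : 1 < b * u := by
    have := (div_lt_iff₀ hbpos).mp hu
    linarith [this]
  have hLb : 0 ≤ Real.log b := Real.log_nonneg hb
  have hlogu : Real.log u = Real.log (b*u) - Real.log b := by
    rw [Real.log_mul (ne_of_gt hbpos) (ne_of_gt hupos)]; ring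
  rcases le_or_gt ((b*u)^2) b with hs | hs
  · have h1 : 2 * Real.log (b*u) ≤ Real.log b := by
      have := Real.log_le_log (by positivity) hs
      rwa [Real.log_pow] at this
    have h2 : Real.log u ≤ -(Real.log b / 2) := by rw [hlogu]; linarith
    have h3 : Real.log b ^ 2 / 4 ≤ Real.log u ^ 2 := by nlinarith
    have h4 : (1:ℝ) ≤ Real.exp (b*u/8) := by
      rw [Real.one_le_exp_iff]; positivity
    have h5 : (0:ℝ) < Real.log u ^ 2 + 1 := by positivity
    nlinarith [mul_le_mul_of_nonneg_right h4 (le_of_lt h5)]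
  · set s := b * u with hsdef
    set q := Real.sqrt b with hq
    have hq1 : 1 ≤ q := by
      rw [hq]; nlinarith [Real.sq_sqrt hbpos.le, Real.sqrt_nonneg b]
    have hqsq : q ^ 2 = b := Real.sq_sqrt hbpos.le
    have hLq : Real.log b ≤ 2*q - 2 := by
      have h1 : Real.log q ≤ q - 1 := Real.log_le_sub_one_of_pos (by linarith)
      have h2 : Real.log q = Real.log b / 2 := by rw [hq, Real.log_sqrt hbpos.le]
      linarith
    have hE : s^2/256 ≤ Real.exp (s/8) := by
      have e1 : s/16 + 1 ≤ Real.exp (s/16) := Real.add_one_le_exp _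
      have e2 : Real.exp (s/8) = Real.exp (s/16) * Real.exp (s/16) := by
        rw [← Real.exp_add]; ring_nf
      nlinarith [Real.exp_pos (s/16)]
    have hX : (1:ℝ) ≤ Real.log u ^ 2 + 1 := by nlinarith [sq_nonneg (Real.log u)]
    have h5 : 4*s^2 ≤ 1024 * Real.exp (s/8) * (Real.log u ^ 2 + 1) := by
      nlinarith [mul_le_mul_of_nonneg_left hX (by positivity : (0:ℝ) ≤ 1024 * Real.exp (s/8))]
    have hL2 : Real.log b ^ 2 ≤ (2*q-2)^2 := by nlinarith
    have hfin : Real.log b ^ 2 + 1 ≤ 4*s^2 := by nlinarith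
    calc Real.log b ^2 + 1 ≤ 4*s^2 := hfin
      _ ≤ 1024 * Real.exp (b*u/8) * (Real.log u ^2+1) := by rw [← hsdef]; exact h5

lemma exp_int_eq (v t a : ℝ) (hv : 0 < v) (h : t ≤ a) :
    ∫ u in Set.Ioc t a, Real.exp (-(v*u)/4) =
      (4/v) * (Real.exp (-(v*t)/4) - Real.exp (-(v*a)/4)) := by
  have hder : ∀ x : ℝ, HasDerivAt (fun x => -(4/v) * Real.exp (-(v*x)/4))
      (Real.exp (-(v*x)/4)) x := by
    intro x
    have h1 : HasDerivAt (fun x : ℝ => -(v*x)/4) (-(v*1)/4) x :=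
      (((hasDerivAt_id x).const_mul v).neg).div_const 4
    have h2 := (h1.exp).const_mul (-(4/v))
    refine h2.congr_deriv ?_
    field_simp
  have hcont : Continuous fun u : ℝ => Real.exp (-(v*u)/4) := by continuity
  have := intervalIntegral.integral_eq_sub_of_hasDerivAt
    (fun x _ => hder x) (hcont.intervalIntegrable t a)
  rw [intervalIntegral.integral_of_le h] at this
  rw [this]; ring

lemma exp_int_le (v t a : ℝ) (hv : 0 < v) (ht : 0 ≤ t) (h : t ≤ a) :
    ∫ u in Set.Ioc t a, Real.exp (-(v*u)/4) ≤ 4/v := by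
  rw [exp_int_eq v t a hv h]
  have h1 : Real.exp (-(v*t)/4) ≤ 1 := by
    rw [Real.exp_le_one_iff]; nlinarith
  have h2 : 0 < Real.exp (-(v*a)/4) := Real.exp_pos _
  have : (0:ℝ) < 4/v := by positivity
  nlinarith

set_option maxHeartbeats 2000000 in
theorem stmt_3 :
    ∃ c : ℝ, 1 ≤ c ∧ ∀ a v : ℝ, 0 < a → a ≤ 1 → 0 < v →
      c⁻¹ * (1 / ((v + 1/a) ^ 2 * ((Real.log (v + 1/a)) ^ 2 + 1)))
        ≤ (∫ u in Set.Ioc (0:ℝ) a, Real.exp (-(v * u)) * u / ((Real.log u) ^ 2 + 1)) ∧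
      (∫ u in Set.Ioc (0:ℝ) a, Real.exp (-(v * u)) * u / ((Real.log u) ^ 2 + 1))
        ≤ c * (1 / ((v + 1/a) ^ 2 * ((Real.log (v + 1/a)) ^ 2 + 1))) := by
  refine ⟨1048576, by norm_num, fun a v ha ha1 hv => ?_⟩
  set b : ℝ := v + 1/a with hbdef
  have hainv : 1 ≤ 1/a := by rw [le_div_iff₀ ha]; linarith
  have hb1 : 1 < b := by rw [hbdef]; linarith
  have hbpos : 0 < b := by linarith
  have hbne : b ≠ 0 := ne_of_gt hbpos
  set D : ℝ := Real.log b ^ 2 + 1 with hDdef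
  have hLb : 0 ≤ Real.log b := Real.log_nonneg hb1.le
  have hD1 : 1 ≤ D := by rw [hDdef]; nlinarith [sq_nonneg (Real.log b)]
  have hDpos : 0 < D := by linarith
  have hDne : D ≠ 0 := ne_of_gt hDpos
  set F : ℝ → ℝ := fun u => Real.exp (-(v * u)) * u / (Real.log u ^ 2 + 1) with hFdef
  have hab : a * b = a * v + 1 := by
    rw [hbdef]; field_simp
  have hba : 1/b < a := by
    rw [div_lt_iff₀ hbpos]; nlinarith
  have htpos : 0 < 1/b := div_pos one_pos hbpos
  -- measurability and integrability of F on Ioc 0 a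
  have hmeas : Measurable F := by
    exact ((Real.measurable_exp.comp ((measurable_const.mul measurable_id).neg)).mul
      measurable_id).div ((Real.measurable_log.pow_const 2).add measurable_const)
  have hFpt : ∀ u ∈ Set.Ioc (0:ℝ) a, 0 ≤ F u ∧ F u ≤ u := by
    intro u hu
    have hu0 : 0 < u := hu.1
    have hden : (1:ℝ) ≤ Real.log u ^ 2 + 1 := by nlinarith [sq_nonneg (Real.log u)]
    have hexp1 : Real.exp (-(v*u)) ≤ 1 := by
      rw [Real.exp_le_one_iff]; nlinarith
    constructor
    · apply div_nonneg (mul_nonneg (Real.exp_pos _).le hu0.le) (by positivity)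
    · calc Real.exp (-(v*u)) * u / (Real.log u ^ 2 + 1)
          ≤ u / 1 := by
            apply div_le_div₀ hu0.le _ one_pos hden
            nlinarith [Real.exp_pos (-(v*u))]
        _ = u := by ring
  have hFint : IntegrableOn F (Set.Ioc 0 a) := by
    apply Integrable.mono' (continuous_id.integrableOn_Ioc) hmeas.aestronglyMeasurable.restrict
    rw [ae_restrict_iff' measurableSet_Ioc]
    filter_upwards with u hu
    rw [Real.norm_eq_abs, abs_of_nonneg (hFpt u hu).1]
    exact (hFpt u hu).2
  have hFnn : 0 ≤ᵐ[volume.restrict (Set.Ioc (0:ℝ) a)] F := by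
    filter_upwards [ae_restrict_mem measurableSet_Ioc] with u hu
    exact (hFpt u hu).1
  have hRpos : 0 < 1/(b^2*D) := div_pos one_pos (mul_pos (pow_pos hbpos 2) hDpos)
  clear_value b D F
  constructor
  · -- LOWER BOUND
    have hJsub : Set.Ioc (1/(2*b)) (1/b) ⊆ Set.Ioc (0:ℝ) a :=
      Set.Ioc_subset_Ioc (le_of_lt (div_pos one_pos (by linarith))) hba.le
    have hlow : ∀ u ∈ Set.Ioc (1/(2*b)) (1/b), 1/(12*b*D) ≤ F u := by
      intro u hu
      have hu1 : 1/(2*b) < u := hu.1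
      have hu2 : u ≤ 1/b := hu.2
      have hu0 : 0 < u := lt_trans (div_pos one_pos (by linarith)) hu1
      have hvu : v * u ≤ 1 := by
        have h1 : u ≤ 1/b := hu2
        have h2 : v ≤ b := by rw [hbdef]; linarith
        calc v * u ≤ v * (1/b) := by nlinarith
          _ ≤ b * (1/b) := by
              apply mul_le_mul_of_nonneg_right h2 htpos.le
          _ = 1 := by field_simp
      have hexp : (1:ℝ)/3 ≤ Real.exp (-(v*u)) := by
        have h1 : Real.exp (-1 : ℝ) ≤ Real.exp (-(v*u)) := by
          apply Real.exp_le_exp.mpr; linarith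
        have h2 : Real.exp (-1 : ℝ) = (Real.exp 1)⁻¹ := Real.exp_neg 1
        have h3 : Real.exp 1 ≤ 3 := by linarith [Real.exp_one_lt_d9]
        have h4 : (1:ℝ)/3 ≤ (Real.exp 1)⁻¹ := by
          rw [div_le_iff₀ (by norm_num : (0:ℝ) < 3)]
          rw [inv_mul_eq_div, le_div_iff₀ (Real.exp_pos 1)]
          linarith
        linarith [h2 ▸ h1]
      have hlogle : Real.log u ≤ -Real.log b := by
        calc Real.log u ≤ Real.log (1/b) := Real.log_le_log hu0 hu2
          _ = -Real.log b := by rw [one_div, Real.log_inv]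
      have hlogge : -(Real.log 2 + Real.log b) ≤ Real.log u := by
        have h1 : Real.log (1/(2*b)) ≤ Real.log u := Real.log_le_log (by positivity) hu1.le
        have h2 : Real.log (1/(2*b)) = -(Real.log 2 + Real.log b) := by
          rw [one_div, Real.log_inv, Real.log_mul (by norm_num) hbne]
        rw [h2] at h1; exact h1
      have hl2 : Real.log 2 < 0.6931471808 := Real.log_two_lt_d9
      have hl2' : 0 < Real.log 2 := Real.log_pos (by norm_num)
      have hden : Real.log u ^ 2 + 1 ≤ 2 * D := by
        rw [hDdef]
        nlinarith [sq_nonneg (Real.log b - Real.log 2), sq_nonneg (Real.log u)]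
      have hue : 1/(2*b) ≤ u := hu1.le
      rw [hFdef]
      have key : (1/3) * (1/(2*b)) ≤ Real.exp (-(v*u)) * u :=
        mul_le_mul hexp hue (by positivity) (Real.exp_pos _).le
      calc 1/(12*b*D) = ((1/3) * (1/(2*b))) / (2*D) := by
            field_simp [hbne, hDne]; ring
        _ ≤ Real.exp (-(v*u)) * u / (Real.log u ^ 2 + 1) := by
            apply div_le_div₀ (mul_nonneg (Real.exp_pos _).le hu0.le) key (by positivity) hden
    have h1 : ∫ _u in Set.Ioc (1/(2*b)) (1/b), 1/(12*b*D) ≤ ∫ u in Set.Ioc (1/(2*b)) (1/b), F u :=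
      setIntegral_mono_on
        (integrableOn_const measure_Ioc_lt_top.ne)
        (hFint.mono_set hJsub) measurableSet_Ioc hlow
    have h2 : ∫ u in Set.Ioc (1/(2*b)) (1/b), F u ≤ ∫ u in Set.Ioc (0:ℝ) a, F u :=
      setIntegral_mono_set hFint hFnn (HasSubset.Subset.eventuallyLE hJsub)
    have heq : 1/b - 1/(2*b) = 1/(2*b) := by
      field_simp [hbne]
      norm_num
    have h3 : ∫ _u in Set.Ioc (1/(2*b)) (1/b), 1/(12*b*D) = (1/(2*b)) * (1/(12*b*D)) := by
      rw [setIntegral_const, measureReal_def, Real.volume_Ioc, heq,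
        ENNReal.toReal_ofReal (le_of_lt (div_pos one_pos (by linarith)))]
      rw [smul_eq_mul]
    have h4 : (1048576:ℝ)⁻¹ * (1 / (b^2*D)) ≤ (1/(2*b)) * (1/(12*b*D)) := by
      have e1 : (1/(2*b)) * (1/(12*b*D)) = (1/24) * (1/(b^2*D)) := by
        field_simp [hbne, hDne]
        ring
      rw [e1]
      apply mul_le_mul_of_nonneg_right (by norm_num) hRpos.le
    calc (1048576:ℝ)⁻¹ * (1 / (b^2*D)) ≤ (1/(2*b)) * (1/(12*b*D)) := h4
      _ = ∫ _u in Set.Ioc (1/(2*b)) (1/b), 1/(12*b*D) := h3.symm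
      _ ≤ ∫ u in Set.Ioc (1/(2*b)) (1/b), F u := h1
      _ ≤ ∫ u in Set.Ioc (0:ℝ) a, F u := h2
  · -- UPPER BOUND
    have hsub1 : Set.Ioc (0:ℝ) (1/b) ⊆ Set.Ioc (0:ℝ) a := Set.Ioc_subset_Ioc_right hba.le
    have hsub2 : Set.Ioc (1/b) a ⊆ Set.Ioc (0:ℝ) a := Set.Ioc_subset_Ioc_left htpos.le
    have hsplit : ∫ u in Set.Ioc (0:ℝ) a, F u
        = (∫ u in Set.Ioc (0:ℝ) (1/b), F u) + ∫ u in Set.Ioc (1/b) a, F u := by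
      rw [← setIntegral_union (Set.Ioc_disjoint_Ioc_of_le le_rfl) measurableSet_Ioc
        (hFint.mono_set hsub1) (hFint.mono_set hsub2)]
      rw [Set.Ioc_union_Ioc_eq_Ioc htpos.le hba.le]
    -- Part 1
    have hP1 : ∫ u in Set.Ioc (0:ℝ) (1/b), F u ≤ (1/2) * (1 / (b^2*D)) := by
      have hpt : ∀ u ∈ Set.Ioc (0:ℝ) (1/b), F u ≤ u / D := by
        intro u hu
        have hu0 : 0 < u := hu.1
        have hu2 : u ≤ 1/b := hu.2
        have hlogle : Real.log u ≤ -Real.log b := by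
          calc Real.log u ≤ Real.log (1/b) := Real.log_le_log hu0 hu2
            _ = -Real.log b := by rw [one_div, Real.log_inv]
        have hden : D ≤ Real.log u ^ 2 + 1 := by rw [hDdef]; nlinarith
        have hexp1 : Real.exp (-(v*u)) ≤ 1 := by
          rw [Real.exp_le_one_iff]; nlinarith
        rw [hFdef]
        apply div_le_div₀ hu0.le _ hDpos hden
        nlinarith [Real.exp_pos (-(v*u))]
      have hmono := setIntegral_mono_on (hFint.mono_set hsub1)
        ((continuous_id.div_const D).integrableOn_Ioc) measurableSet_Ioc hpt
      have hcomp : ∫ u in Set.Ioc (0:ℝ) (1/b), u / D = (1/2) * (1 / (b^2*D)) := by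
        rw [integral_div, ← intervalIntegral.integral_of_le htpos.le, integral_id]
        field_simp [hbne, hDne]
        ring
      calc ∫ u in Set.Ioc (0:ℝ) (1/b), F u ≤ ∫ u in Set.Ioc (0:ℝ) (1/b), u / D := hmono
        _ = (1/2) * (1 / (b^2*D)) := hcomp
    -- Part 2
    have hP2 : ∫ u in Set.Ioc (1/b) a, F u ≤ 131072 * (1 / (b^2*D)) := by
      -- pointwise bound
      have hpt : ∀ u ∈ Set.Ioc (1/b) a, F u ≤ 8192/(v*D) * Real.exp (-(v*u)/4) := by
        intro u hu
        have hu1 : 1/b < u := hu.1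
        have hu2 : u ≤ a := hu.2
        have hu0 : 0 < u := lt_trans htpos hu1
        have hstar := star_lem b u hb1.le hu1
        rw [← hDdef] at hstar
        have hXpos : (0:ℝ) < Real.log u ^ 2 + 1 := by positivity
        have hinv : 1/(Real.log u ^ 2 + 1) ≤ 1024 * Real.exp (b*u/8) / D := by
          rw [div_le_div_iff₀ hXpos hDpos]; nlinarith
        have step1 : F u ≤ Real.exp (-(v*u)) * u * (1024 * Real.exp (b*u/8)) * (1/D) := by
          simp only [hFdef]
          have e1 : Real.exp (-(v*u)) * u / (Real.log u ^ 2 + 1)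
              = Real.exp (-(v*u)) * u * (1/(Real.log u ^ 2 + 1)) := by ring
          rw [e1]
          have e2 : Real.exp (-(v*u)) * u * (1024 * Real.exp (b*u/8)) * (1/D)
              = Real.exp (-(v*u)) * u * (1024 * Real.exp (b*u/8) / D) := by ring
          rw [e2]
          exact mul_le_mul_of_nonneg_left hinv
            (mul_nonneg (Real.exp_pos _).le hu0.le)
        -- scalar exponential bound
        have hbu : b*u + -(v*u) ≤ 1/8*8 + v*u/8*8 + -(v*u) := by
          have hua : u/a ≤ 1 := (div_le_one ha).mpr hu2
          have : b*u = v*u + u/a := by rw [hbdef]; field_simp [ha.ne']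
          nlinarith
        have hscal : Real.exp (-(v*u)) * u * (1024 * Real.exp (b*u/8))
            ≤ (8192/v) * Real.exp (-(v*u)/4) := by
          have hid : Real.exp (1/8 - 7*(v*u)/8)
              = Real.exp (1/8) * (Real.exp (-(v*u/2)) * Real.exp (-(3*(v*u)/8))) := by
            rw [← Real.exp_add, ← Real.exp_add]
            congr 1
            ring
          have hxe : u * Real.exp (-(v*u/2)) ≤ 2/v := by
            have h0 : 0 ≤ v*u/2 := by positivity
            have hk := xexp_le_one (v*u/2) h0
            have e3 : u * Real.exp (-(v*u/2)) = (2/v) * ((v*u/2) * Real.exp (-(v*u/2))) := by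
              field_simp [hv.ne']
            rw [e3]
            calc (2/v) * ((v*u/2) * Real.exp (-(v*u/2))) ≤ (2/v) * 1 :=
                mul_le_mul_of_nonneg_left hk (by positivity)
              _ = 2/v := by ring
          have h38 : Real.exp (-(3*(v*u)/8)) ≤ Real.exp (-(v*u)/4) := by
            apply Real.exp_le_exp.mpr; nlinarith
          have hexp18 : Real.exp ((1:ℝ)/8) ≤ 3 := by
            calc Real.exp ((1:ℝ)/8) ≤ Real.exp 1 := Real.exp_le_exp.mpr (by norm_num)
              _ ≤ 3 := by linarith [Real.exp_one_lt_d9]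
          calc Real.exp (-(v*u)) * u * (1024 * Real.exp (b*u/8))
              = 1024 * (u * Real.exp (b*u/8 + -(v*u))) := by rw [Real.exp_add]; ring
            _ ≤ 1024 * (u * Real.exp (1/8 - 7*(v*u)/8)) := by
                apply mul_le_mul_of_nonneg_left _ (by norm_num)
                apply mul_le_mul_of_nonneg_left _ hu0.le
                apply Real.exp_le_exp.mpr
                linarith
            _ = 1024 * Real.exp (1/8) * Real.exp (-(3*(v*u)/8)) * (u * Real.exp (-(v*u/2))) := by
                rw [hid]; ring
            _ ≤ 1024 * Real.exp (1/8) * Real.exp (-(3*(v*u)/8)) * (2/v) := by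
                apply mul_le_mul_of_nonneg_left hxe (by positivity)
            _ ≤ 1024 * 3 * Real.exp (-(v*u)/4) * (2/v) := by
                have g1 : 1024 * Real.exp (1/8) * Real.exp (-(3*(v*u)/8))
                    ≤ 1024 * 3 * Real.exp (-(v*u)/4) := by
                  apply mul_le_mul (by nlinarith [Real.exp_pos ((1:ℝ)/8)]) h38
                    (Real.exp_pos _).le (by positivity)
                apply mul_le_mul_of_nonneg_right g1 (div_nonneg (by norm_num) hv.le)
            _ ≤ (8192/v) * Real.exp (-(v*u)/4) := by
                have e4 : 1024 * 3 * Real.exp (-(v*u)/4) * (2/v)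
                    = (6144/v) * Real.exp (-(v*u)/4) := by
                      field_simp
                      ring
                rw [e4]
                apply mul_le_mul_of_nonneg_right _ (Real.exp_pos _).le
                exact div_le_div₀ (by norm_num) (by norm_num) hv le_rfl
        calc F u ≤ Real.exp (-(v*u)) * u * (1024 * Real.exp (b*u/8)) * (1/D) := step1
          _ ≤ (8192/v) * Real.exp (-(v*u)/4) * (1/D) :=
              mul_le_mul_of_nonneg_right hscal (le_of_lt (one_div_pos.mpr hDpos))
          _ = 8192/(v*D) * Real.exp (-(v*u)/4) := by
              rw [mul_assoc, mul_comm (Real.exp (-(v*u)/4)), ← mul_assoc, div_mul_div_comm, mul_one]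
      have hmono := setIntegral_mono_on (hFint.mono_set hsub2)
        (((continuous_const.mul (by continuity : Continuous fun u : ℝ =>
          Real.exp (-(v*u)/4)))).integrableOn_Ioc) measurableSet_Ioc hpt
      have hI : ∫ u in Set.Ioc (1/b) a, 8192/(v*D) * Real.exp (-(v*u)/4)
          = 8192/(v*D) * ∫ u in Set.Ioc (1/b) a, Real.exp (-(v*u)/4) :=
        integral_const_mul _ _
      set I : ℝ := ∫ u in Set.Ioc (1/b) a, Real.exp (-(v*u)/4) with hIdef
      have hc0 : 0 ≤ 8192/(v*D) := div_nonneg (by norm_num) (mul_pos hv hDpos).le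
      rcases le_or_gt (v*a) 1 with hva | hva
      · -- small v*a : use I ≤ a - 1/b = v*a/b
        have hIle : I ≤ v*a/b := by
          have hone : ∀ u ∈ Set.Ioc (1/b) a, Real.exp (-(v*u)/4) ≤ (1:ℝ) := by
            intro u hu
            rw [Real.exp_le_one_iff]
            nlinarith [lt_trans htpos hu.1]
          have this : (∫ u in Set.Ioc (1/b) a, Real.exp (-(v*u)/4))
              ≤ ∫ _u in Set.Ioc (1/b) a, (1:ℝ) :=
            setIntegral_mono_on
              ((by continuity : Continuous fun u : ℝ => Real.exp (-(v*u)/4)).integrableOn_Ioc)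
              (integrableOn_const measure_Ioc_lt_top.ne) measurableSet_Ioc hone
          have hconst : ∫ _u in Set.Ioc (1/b) a, (1:ℝ) = a - 1/b := by
            rw [setIntegral_const, measureReal_def, Real.volume_Ioc,
              ENNReal.toReal_ofReal (by linarith), smul_eq_mul, mul_one]
          have hval : a - 1/b = v*a/b := by
            rw [eq_div_iff hbne, sub_mul, one_div, inv_mul_cancel₀ hbne]
            nlinarith [hab]
          rw [hIdef]
          calc (∫ u in Set.Ioc (1/b) a, Real.exp (-(v*u)/4))
              ≤ ∫ _u in Set.Ioc (1/b) a, (1:ℝ) := this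
            _ = a - 1/b := hconst
            _ = v*a/b := hval
        have hab2 : a * b ≤ 2 := by nlinarith
        have e5 : 8192/(v*D) * (v*a/b) = 8192*a/(b*D) := by
          field_simp [hv.ne', hbne, hDne]
        have e6 : 8192*a/(b*D) ≤ 131072 * (1/(b^2*D)) := by
          rw [div_le_iff₀ (by positivity : (0:ℝ) < b*D)]
          have e7 : (131072:ℝ) * (1/(b^2*D)) * (b*D) = 131072/b := by
            field_simp [hbne, hDne]
          rw [e7, le_div_iff₀ hbpos]
          nlinarith
        calc ∫ u in Set.Ioc (1/b) a, F u
            ≤ ∫ u in Set.Ioc (1/b) a, 8192/(v*D) * Real.exp (-(v*u)/4) := hmono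
          _ = 8192/(v*D) * I := hI
          _ ≤ 8192/(v*D) * (v*a/b) := mul_le_mul_of_nonneg_left hIle hc0
          _ = 8192*a/(b*D) := e5
          _ ≤ 131072 * (1/(b^2*D)) := e6
      · -- large v*a : use I ≤ 4/v and b ≤ 2v
        have hIle : I ≤ 4/v := by
          rw [hIdef]
          exact exp_int_le v (1/b) a hv htpos.le hba.le
        have hb2v : b ≤ 2*v := by
          have : 1/a ≤ v := by rw [div_le_iff₀ ha]; nlinarith
          rw [hbdef]; linarith
        have e6 : 8192/(v*D) * (4/v) ≤ 131072 * (1/(b^2*D)) := by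
          have e7 : 8192/(v*D) * (4/v) = 32768 / (v^2*D) := by
            field_simp [hv.ne', hDne]
            ring
          rw [e7, div_le_iff₀ (mul_pos (pow_pos hv 2) hDpos)]
          have e8 : 131072 * (1/(b^2*D)) * (v^2*D) = 131072 * v^2 / b^2 := by
            field_simp [hbne, hDne]
          rw [e8, le_div_iff₀ (pow_pos hbpos 2)]
          nlinarith
        calc ∫ u in Set.Ioc (1/b) a, F u
            ≤ ∫ u in Set.Ioc (1/b) a, 8192/(v*D) * Real.exp (-(v*u)/4) := hmono
          _ = 8192/(v*D) * I := hI
          _ ≤ 8192/(v*D) * (4/v) := mul_le_mul_of_nonneg_left hIle hc0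
          _ ≤ 131072 * (1/(b^2*D)) := e6
    calc ∫ u in Set.Ioc (0:ℝ) a, F u
        = (∫ u in Set.Ioc (0:ℝ) (1/b), F u) + ∫ u in Set.Ioc (1/b) a, F u := hsplit
      _ ≤ (1/2) * (1 / (b^2*D)) + 131072 * (1 / (b^2*D)) := add_le_add hP1 hP2
      _ ≤ 1048576 * (1 / (b^2*D)) := by nlinarith [hRpos]
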